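/- For pairwise distinct nonzero complex numbers z_0,...,z_n and integer N ≥ n, the divided difference of the power function z ↦ z^N satisfies [z_0,...,z_n] id^N = ∑_{α ∈ ℕ^{n+1}, |α| = N-n} z_0^{α_0} ⋯ z_n^{α_n} (the complete homogeneous symmetric polynomial of degree N - n). -/

import Mathlib

/-- Divided differences, defined recursively. -/
noncomputable def divDiff (f : ℂ → ℂ) : (n : ℕ) → (Fin (n + 1) → ℂ) → ℂ
  | 0, x => f (x 0)
  | n + 1, x =>
      (divDiff f n (fun i => x i.castSucc) - divDiff f n (fun i => x i.succ)) /
        (x 0 - x (Fin.last (n + 1)))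

open Finset Finset.Nat

private lemma keyL1 (m k : ℕ) (z : Fin (m + 2) → ℂ) :
    (∑ α ∈ antidiagonalTuple (m + 1) k, ∏ j : Fin (m + 1), z j.castSucc ^ α j) =
      ∑ β ∈ (antidiagonalTuple (m + 2) k).filter (fun β => β (Fin.last (m + 1)) = 0),
        ∏ j, z j ^ β j := by
  refine Finset.sum_bij' (fun α _ => Fin.snoc α 0) (fun β _ => fun j => β j.castSucc)
    ?_ ?_ ?_ ?_ ?_
  · intro α hα
    rw [mem_antidiagonalTuple] at hα
    rw [Finset.mem_filter, mem_antidiagonalTuple]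
    constructor
    · rw [Fin.sum_univ_castSucc]
      simp [hα]
    · simp
  · intro β hβ
    rw [Finset.mem_filter, mem_antidiagonalTuple] at hβ
    rw [mem_antidiagonalTuple]
    have := hβ.1
    rw [Fin.sum_univ_castSucc, hβ.2, add_zero] at this
    exact this
  · intro α hα
    funext j
    simp
  · intro β hβ
    rw [Finset.mem_filter] at hβ
    funext j
    refine Fin.lastCases ?_ ?_ j
    · simp [hβ.2]
    · intro i; simp
  · intro α hα
    conv_rhs => rw [Fin.prod_univ_castSucc]
    simp

private lemma keyL2 (m k : ℕ) (z : Fin (m + 2) → ℂ) :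
    (∑ α ∈ antidiagonalTuple (m + 1) k, ∏ j : Fin (m + 1), z j.succ ^ α j) =
      ∑ β ∈ (antidiagonalTuple (m + 2) k).filter (fun β => β 0 = 0),
        ∏ j, z j ^ β j := by
  refine Finset.sum_bij' (fun α _ => Fin.cons 0 α) (fun β _ => fun j => β j.succ)
    ?_ ?_ ?_ ?_ ?_
  · intro α hα
    rw [mem_antidiagonalTuple] at hα
    rw [Finset.mem_filter, mem_antidiagonalTuple]
    constructor
    · rw [Fin.sum_univ_succ]
      simp [hα]
    · simp
  · intro β hβ
    rw [Finset.mem_filter, mem_antidiagonalTuple] at hβ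
    rw [mem_antidiagonalTuple]
    have := hβ.1
    rw [Fin.sum_univ_succ, hβ.2, zero_add] at this
    exact this
  · intro α hα
    funext j
    simp
  · intro β hβ
    rw [Finset.mem_filter] at hβ
    funext j
    refine Fin.cases ?_ ?_ j
    · simp [hβ.2]
    · intro i; simp
  · intro α hα
    conv_rhs => rw [Fin.prod_univ_succ]
    simp

private lemma keyR (m k : ℕ) (z : Fin (m + 2) → ℂ) (c : Fin (m + 2)) :
    z c * ∑ α ∈ antidiagonalTuple (m + 2) k, ∏ j, z j ^ α j =
      ∑ β ∈ (antidiagonalTuple (m + 2) (k + 1)).filter (fun β => ¬ β c = 0),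
        ∏ j, z j ^ β j := by
  rw [Finset.mul_sum]
  refine Finset.sum_bij' (fun α _ => α + Pi.single c 1) (fun β _ => β - Pi.single c 1)
    ?_ ?_ ?_ ?_ ?_
  · intro α hα
    rw [mem_antidiagonalTuple] at hα
    rw [Finset.mem_filter, mem_antidiagonalTuple]
    constructor
    · simp only [Pi.add_apply, Finset.sum_add_distrib, hα, Finset.sum_pi_single']
      simp
    · simp [Pi.single_eq_same]
  · intro β hβ
    rw [Finset.mem_filter, mem_antidiagonalTuple] at hβ
    rw [mem_antidiagonalTuple]
    have h1 : β c + ∑ j ∈ Finset.univ.erase c, β j = k + 1 := by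
      rw [Finset.add_sum_erase _ _ (Finset.mem_univ c)]
      exact hβ.1
    rw [← Finset.add_sum_erase _ _ (Finset.mem_univ c)]
    simp only [Pi.sub_apply]
    have h3 : ∑ j ∈ Finset.univ.erase c, (β j - (Pi.single c 1 : Fin (m + 2) → ℕ) j) =
        ∑ j ∈ Finset.univ.erase c, β j := by
      refine Finset.sum_congr rfl fun j hj => ?_
      rw [Pi.single_eq_of_ne (Finset.ne_of_mem_erase hj)]
      omega
    rw [h3, Pi.single_eq_same]
    have hc : β c ≠ 0 := hβ.2
    omega
  · intro α hα
    funext j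
    simp only [Pi.sub_apply, Pi.add_apply]
    omega
  · intro β hβ
    rw [Finset.mem_filter] at hβ
    funext j
    simp only [Pi.add_apply, Pi.sub_apply]
    rcases eq_or_ne j c with rfl | hj
    · rw [Pi.single_eq_same]
      have : β j ≠ 0 := hβ.2
      omega
    · rw [Pi.single_eq_of_ne hj]
      omega
  · intro α hα
    simp only [Pi.add_apply, pow_add, Finset.prod_mul_distrib]
    have h : ∏ j, z j ^ Pi.single c 1 j = z c := by
      rw [Fintype.prod_eq_single c fun j hj => by rw [Pi.single_eq_of_ne hj, pow_zero]]
      rw [Pi.single_eq_same, pow_one]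
    rw [h, mul_comm]

private lemma key (m k : ℕ) (z : Fin (m + 2) → ℂ) :
    ((∑ α ∈ antidiagonalTuple (m + 1) (k + 1), ∏ j : Fin (m + 1), z j.castSucc ^ α j) -
        ∑ α ∈ antidiagonalTuple (m + 1) (k + 1), ∏ j : Fin (m + 1), z j.succ ^ α j) =
      (z 0 - z (Fin.last (m + 1))) *
        ∑ β ∈ antidiagonalTuple (m + 2) k, ∏ j, z j ^ β j := by
  rw [keyL1, keyL2, sub_mul, keyR m k z 0, keyR m k z (Fin.last (m + 1))]
  set T := antidiagonalTuple (m + 2) (k + 1) with hT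
  have e1 : ∑ β ∈ T.filter (fun β => β (Fin.last (m + 1)) = 0), ∏ j, z j ^ β j =
      (∑ β ∈ (T.filter (fun β => β (Fin.last (m + 1)) = 0)).filter (fun β => β 0 = 0),
        ∏ j, z j ^ β j) +
      ∑ β ∈ (T.filter (fun β => β (Fin.last (m + 1)) = 0)).filter (fun β => ¬ β 0 = 0),
        ∏ j, z j ^ β j :=
    (Finset.sum_filter_add_sum_filter_not _ _ _).symm
  have e2 : ∑ β ∈ T.filter (fun β => β 0 = 0), ∏ j, z j ^ β j =
      (∑ β ∈ (T.filter (fun β => β 0 = 0)).filter (fun β => β (Fin.last (m + 1)) = 0),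
        ∏ j, z j ^ β j) +
      ∑ β ∈ (T.filter (fun β => β 0 = 0)).filter (fun β => ¬ β (Fin.last (m + 1)) = 0),
        ∏ j, z j ^ β j :=
    (Finset.sum_filter_add_sum_filter_not _ _ _).symm
  have e3 : ∑ β ∈ T.filter (fun β => ¬ β 0 = 0), ∏ j, z j ^ β j =
      (∑ β ∈ (T.filter (fun β => ¬ β 0 = 0)).filter (fun β => β (Fin.last (m + 1)) = 0),
        ∏ j, z j ^ β j) +
      ∑ β ∈ (T.filter (fun β => ¬ β 0 = 0)).filter (fun β => ¬ β (Fin.last (m + 1)) = 0),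
        ∏ j, z j ^ β j :=
    (Finset.sum_filter_add_sum_filter_not _ _ _).symm
  have e4 : ∑ β ∈ T.filter (fun β => ¬ β (Fin.last (m + 1)) = 0), ∏ j, z j ^ β j =
      (∑ β ∈ (T.filter (fun β => ¬ β (Fin.last (m + 1)) = 0)).filter (fun β => β 0 = 0),
        ∏ j, z j ^ β j) +
      ∑ β ∈ (T.filter (fun β => ¬ β (Fin.last (m + 1)) = 0)).filter (fun β => ¬ β 0 = 0),
        ∏ j, z j ^ β j :=
    (Finset.sum_filter_add_sum_filter_not _ _ _).symm
  rw [e1, e2, e3, e4]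
  have c1 : (T.filter (fun β => β 0 = 0)).filter (fun β => β (Fin.last (m + 1)) = 0) =
      (T.filter (fun β => β (Fin.last (m + 1)) = 0)).filter (fun β => β 0 = 0) :=
    Finset.filter_comm _ _ _
  have c2 : (T.filter (fun β => ¬ β 0 = 0)).filter (fun β => β (Fin.last (m + 1)) = 0) =
      (T.filter (fun β => β (Fin.last (m + 1)) = 0)).filter (fun β => ¬ β 0 = 0) :=
    Finset.filter_comm _ _ _
  have c3 : (T.filter (fun β => ¬ β 0 = 0)).filter (fun β => ¬ β (Fin.last (m + 1)) = 0) =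
      (T.filter (fun β => ¬ β (Fin.last (m + 1)) = 0)).filter (fun β => ¬ β 0 = 0) :=
    Finset.filter_comm _ _ _
  have c4 : (T.filter (fun β => β 0 = 0)).filter (fun β => ¬ β (Fin.last (m + 1)) = 0) =
      (T.filter (fun β => ¬ β (Fin.last (m + 1)) = 0)).filter (fun β => β 0 = 0) :=
    Finset.filter_comm _ _ _
  rw [c1, c2, c3, c4]
  ring

/-- For pairwise distinct nonzero `z₀,…,zₙ` and `N ≥ n`,
`[z₀,…,zₙ] id^N = ∑_{|α| = N-n} z^α`, the complete homogeneous symmetric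
polynomial of degree `N - n` in `z₀,…,zₙ`. -/
theorem divDiff_pow_of_le (n N : ℕ) (hN : n ≤ N) (z : Fin (n + 1) → ℂ)
    (hz : ∀ j, z j ≠ 0) (hinj : Function.Injective z) :
    divDiff (fun w => w ^ N) n z =
      ∑ α ∈ Finset.Nat.antidiagonalTuple (n + 1) (N - n),
        ∏ j : Fin (n + 1), z j ^ α j := by
  induction n generalizing N with
  | zero =>
    simp [divDiff, antidiagonalTuple_one]
  | succ n ih =>
    have h1 : n ≤ N := Nat.le_of_succ_le hN
    rw [divDiff]
    rw [ih N h1 (fun i => z i.castSucc) (fun j => hz _)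
      (hinj.comp (Fin.castSucc_injective (n + 1)))]
    rw [ih N h1 (fun i => z i.succ) (fun j => hz _)
      (hinj.comp (Fin.succ_injective (n + 1)))]
    have hk : N - n = (N - (n + 1)) + 1 := by omega
    rw [hk, key n (N - (n + 1)) z]
    have hne : z 0 - z (Fin.last (n + 1)) ≠ 0 := by
      rw [sub_ne_zero]
      exact fun h => absurd (hinj h) (by simp [Fin.ext_iff])
    rw [mul_div_cancel_left₀ _ hne]
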